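/- Let S be a (finite) family of subgroups of a finite abelian group K. Then the intersection over H ∈ S of the kernels of the maps R_H : ℂ[K] → ℂ[H*] equals the ℂ-linear span of the basis elements e_g with g ∈ K \ (∪_{H∈S} H). -/

import Mathlib

/-- The character group `K* = Hom(K, ℂˣ)` of a finite abelian group is finite. -/
instance charFinite (K : Type*) [CommGroup K] [Finite K] : Finite (K →* ℂˣ) := by
  have : Fintype K := .ofFinite _
  let S := rootsOfUnity (Fintype.card K) ℂ
  have fF : Finite (K →* S) := .of_injective _ DFunLike.coe_injective
  refine Finite.of_surjective (fun f : K →* S ↦ (Subgroup.subtype _).comp f) fun f ↦ ?_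
  have H : ∀ a, f a ∈ S := by
    intro a
    simp only [mem_rootsOfUnity, ← map_pow, pow_card_eq_one, map_one, S]
  exact ⟨MonoidHom.codRestrict f S H, MonoidHom.ext fun _ ↦ rfl⟩

noncomputable instance charFintype (K : Type*) [CommGroup K] [Finite K] : Fintype (K →* ℂˣ) :=
  Fintype.ofFinite _

/-- `ê_α = ∑_{g ∈ K} α(g)⁻¹ e_g` in the group algebra `ℂ[K]`. -/
noncomputable def ehat {K : Type*} [CommGroup K] [Fintype K] (α : K →* ℂˣ) :
    MonoidAlgebra ℂ K :=
  ∑ g : K, MonoidAlgebra.single g ((((α g)⁻¹ : ℂˣ) : ℂ))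

/-- `ψ_β : ℂ[K] → ℂ[K]`, the linear map determined by `ψ_β(e_g) = β(g) e_g`. -/
noncomputable def psi {K : Type*} [CommGroup K] [Fintype K] (β : K →* ℂˣ) :
    MonoidAlgebra ℂ K →ₗ[ℂ] MonoidAlgebra ℂ K :=
  (Finsupp.lift (MonoidAlgebra ℂ K) ℂ K fun g => ((β g : ℂˣ) : ℂ) • MonoidAlgebra.single g 1) ∘ₗ
    (MonoidAlgebra.coeffLinearEquiv ℂ).toLinearMap

/-- `R_H : ℂ[K] → ℂ[H*]`, the linear map with `R_H(e_g) = ∑_{α ∈ K*} α(g) e_{α|_H}`. -/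
noncomputable def RH {K : Type*} [CommGroup K] [Fintype K] (H : Subgroup K) :
    MonoidAlgebra ℂ K →ₗ[ℂ] MonoidAlgebra ℂ (H →* ℂˣ) :=
  (Finsupp.lift (MonoidAlgebra ℂ (H →* ℂˣ)) ℂ K fun g =>
    ∑ α : K →* ℂˣ, ((α g : ℂˣ) : ℂ) • MonoidAlgebra.single (α.comp H.subtype) 1) ∘ₗ
    (MonoidAlgebra.coeffLinearEquiv ℂ).toLinearMap

section aux
variable {K : Type*} [CommGroup K] [Fintype K]

lemma exists_char_of_not_mem {H : Subgroup K} {g : K} (hg : g ∉ H) :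
    ∃ χ : K →* ℂˣ, (∀ h ∈ H, χ h = 1) ∧ χ g ≠ 1 := by
  have hne : (QuotientGroup.mk g : K ⧸ H) ≠ 1 := by
    simpa [QuotientGroup.eq_one_iff] using hg
  have : NeZero ((Monoid.exponent (K ⧸ H) : ℂ)) :=
    ⟨by exact_mod_cast Monoid.exponent_ne_zero_of_finite⟩
  obtain ⟨φ, hφ⟩ := CommGroup.exists_apply_ne_one_of_hasEnoughRootsOfUnity (K ⧸ H) ℂ hne
  refine ⟨φ.comp (QuotientGroup.mk' H), fun h hh => ?_, hφ⟩
  have : (QuotientGroup.mk h : K ⧸ H) = 1 := (QuotientGroup.eq_one_iff h).mpr hh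
  simp [QuotientGroup.mk'_apply, this]

lemma sum_char_eq_zero {k : K} (hk : k ≠ 1) :
    ∑ α : K →* ℂˣ, ((α k : ℂˣ) : ℂ) = 0 := by
  obtain ⟨χ, -, hχk⟩ := exists_char_of_not_mem (H := ⊥) (by simpa using hk)
  set T := ∑ α : K →* ℂˣ, ((α k : ℂˣ) : ℂ) with hT
  have h1 : ((χ k : ℂˣ) : ℂ) * T = T := by
    rw [hT, Finset.mul_sum]
    exact Fintype.sum_bijective (fun α => χ * α) (Group.mulLeft_bijective χ) _ _
      (fun α => by simp [Units.val_mul])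
  have h2 : (((χ k : ℂˣ) : ℂ) - 1) * T = 0 := by rw [sub_mul, one_mul, h1, sub_self]
  have h3 : ((χ k : ℂˣ) : ℂ) - 1 ≠ 0 := sub_ne_zero.mpr (by
    simpa [Units.val_eq_one] using hχk)
  exact (mul_eq_zero.mp h2).resolve_left h3

lemma RH_single (H : Subgroup K) (g : K) :
    RH H (MonoidAlgebra.single g (1 : ℂ)) =
      ∑ α : K →* ℂˣ, ((α g : ℂˣ) : ℂ) • MonoidAlgebra.single (α.comp H.subtype) (1 : ℂ) := by
  rw [RH, LinearMap.comp_apply]; erw [Finsupp.lift_apply]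
  erw [Finsupp.sum_single_index (by rw [zero_smul]), one_smul]

lemma RH_single_eq_zero {H : Subgroup K} {g : K} (hg : g ∉ H) :
    RH H (MonoidAlgebra.single g (1 : ℂ)) = 0 := by
  obtain ⟨χ, hχH, hχg⟩ := exists_char_of_not_mem hg
  rw [RH_single]
  set T := ∑ α : K →* ℂˣ, ((α g : ℂˣ) : ℂ) • MonoidAlgebra.single (α.comp H.subtype) (1 : ℂ)
    with hT
  have h1 : ((χ g : ℂˣ) : ℂ) • T = T := by
    rw [hT, Finset.smul_sum]
    refine Fintype.sum_bijective (fun α => χ * α) (Group.mulLeft_bijective χ) _ _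
      (fun α => ?_)
    have hres : (χ * α).comp H.subtype = α.comp H.subtype := by
      ext h
      simp [hχH h h.2]
    simp [smul_smul, hres, Units.val_mul]
  have h2 : (((χ g : ℂˣ) : ℂ) - 1) • T = 0 := by rw [sub_smul, one_smul, h1, sub_self]
  have h3 : ((χ g : ℂˣ) : ℂ) - 1 ≠ 0 := sub_ne_zero.mpr (by
    simpa [Units.val_eq_one] using hχg)
  exact (smul_eq_zero.mp h2).resolve_left h3

lemma apply_eq_zero_of_mem_ker {H : Subgroup K} {x : MonoidAlgebra ℂ K}
    (hx : RH H x = 0) {h : K} (hh : h ∈ H) : x.coeff h = 0 := by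
  classical
  set F : MonoidAlgebra ℂ (H →* ℂˣ) →ₗ[ℂ] ℂ :=
    Finsupp.lift ℂ ℂ (H →* ℂˣ) (fun β => (((β ⟨h, hh⟩)⁻¹ : ℂˣ) : ℂ)) ∘ₗ
      (MonoidAlgebra.coeffLinearEquiv ℂ).toLinearMap with hF
  have hFs : ∀ (β : H →* ℂˣ) (c : ℂ),
      F (MonoidAlgebra.single β c) = c * (((β ⟨h, hh⟩)⁻¹ : ℂˣ) : ℂ) := by
    intro β c
    rw [hF, LinearMap.comp_apply]; erw [Finsupp.lift_apply, Finsupp.sum_single_index (by rw [zero_smul])]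
    simp [smul_eq_mul]
  have key : ∀ g : K, F (∑ α : K →* ℂˣ,
      ((α g : ℂˣ) : ℂ) • MonoidAlgebra.single (α.comp H.subtype) (1 : ℂ)) =
      if g = h then (Fintype.card (K →* ℂˣ) : ℂ) else 0 := by
    intro g
    rw [map_sum]
    have : ∀ α : K →* ℂˣ, F (((α g : ℂˣ) : ℂ) • MonoidAlgebra.single (α.comp H.subtype) (1 : ℂ))
        = ((α (g * h⁻¹) : ℂˣ) : ℂ) := by
      intro α
      rw [map_smul, smul_eq_mul, hFs, one_mul]
      rw [show (α.comp H.subtype) ⟨h, hh⟩ = α h from rfl, map_mul, map_inv, Units.val_mul]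
    rw [Finset.sum_congr rfl (fun α _ => this α)]
    by_cases hgh : g = h
    · rw [if_pos hgh]
      have h1 : ∀ α : K →* ℂˣ, ((α (g * h⁻¹) : ℂˣ) : ℂ) = 1 := fun α => by
        rw [hgh, mul_inv_cancel, map_one, Units.val_one]
      rw [Finset.sum_congr rfl (fun α _ => h1 α), Finset.sum_const, Finset.card_univ,
        nsmul_eq_mul, mul_one]
    · rw [if_neg hgh]
      exact sum_char_eq_zero fun hc => hgh (mul_inv_eq_one.mp hc)
  have h0 : F (RH H x) = 0 := by rw [hx, map_zero]
  have hRH : F (RH H x) =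
      x.coeff.sum fun g c => c * (if g = h then (Fintype.card (K →* ℂˣ) : ℂ) else 0) := by
    have hRHx : RH H x = x.coeff.sum fun g c =>
        c • ∑ α : K →* ℂˣ, ((α g : ℂˣ) : ℂ) • MonoidAlgebra.single (α.comp H.subtype) (1:ℂ) :=
      rfl
    rw [hRHx, map_finsuppSum]
    refine Finsupp.sum_congr fun g _ => ?_
    rw [map_smul, smul_eq_mul, key g]
  have h2 : x.coeff.sum (fun g c => c * (if g = h then (Fintype.card (K →* ℂˣ) : ℂ) else 0))
      = if h ∈ x.coeff.support then x.coeff h * (Fintype.card (K →* ℂˣ) : ℂ) else 0 := by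
    rw [Finsupp.sum]
    rw [Finset.sum_congr rfl (fun g _ => by rw [mul_ite, mul_zero])]
    exact Finset.sum_ite_eq' x.coeff.support h (fun g => x.coeff g * (Fintype.card (K →* ℂˣ) : ℂ))
  rw [hRH, h2] at h0
  by_cases hs : h ∈ x.coeff.support
  · rw [if_pos hs] at h0
    have hcard : (Fintype.card (K →* ℂˣ) : ℂ) ≠ 0 := by
      exact_mod_cast Fintype.card_ne_zero
    exact (mul_eq_zero.mp h0).resolve_right hcard
  · exact Finsupp.notMem_support_iff.mp hs

lemma ker_RH (H : Subgroup K) :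
    LinearMap.ker (RH H) = MonoidAlgebra.supported ℂ ℂ ((H : Set K)ᶜ) := by
  apply le_antisymm
  · intro x hx
    rw [MonoidAlgebra.mem_supported']
    intro g hg
    exact apply_eq_zero_of_mem_ker (LinearMap.mem_ker.mp hx) (by simpa using hg)
  · rw [MonoidAlgebra.supported_eq_span_single, Submodule.span_le]
    rintro _ ⟨g, hg, rfl⟩
    exact LinearMap.mem_ker.mpr (RH_single_eq_zero hg)

end aux

/-- for a family `S` of subgroups of `K`, the intersection of the kernels of
the maps `R_H : ℂ[K] → ℂ[H*]`, `H ∈ S`, equals the span of the `e_g` with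
`g ∈ K \ (∪_{H ∈ S} H)`. -/
theorem stmt_16 (K : Type*) [CommGroup K] [Fintype K] (S : Set (Subgroup K)) :
    (⨅ H ∈ S, LinearMap.ker (RH H)) =
      Submodule.span ℂ {x : MonoidAlgebra ℂ K |
        ∃ g : K, (∀ H ∈ S, g ∉ H) ∧ x = MonoidAlgebra.single g (1 : ℂ)} := by
  classical
  have hset : {x : MonoidAlgebra ℂ K |
      ∃ g : K, (∀ H ∈ S, g ∉ H) ∧ x = MonoidAlgebra.single g (1 : ℂ)}
      = (fun g : K => MonoidAlgebra.single g (1 : ℂ)) '' {g : K | ∀ H ∈ S, g ∉ H} := by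
    ext x
    constructor
    · rintro ⟨g, hg, rfl⟩; exact ⟨g, hg, rfl⟩
    · rintro ⟨g, hg, rfl⟩; exact ⟨g, hg, rfl⟩
  rw [hset, ← MonoidAlgebra.supported_eq_span_single]
  ext x
  simp only [Submodule.mem_iInf, ker_RH]
  constructor
  · intro hmem
    rw [MonoidAlgebra.mem_supported']
    intro g hg
    simp only [Set.mem_setOf_eq, not_forall, Classical.not_imp, not_not] at hg
    obtain ⟨H, hHS, hgH⟩ := hg
    have hm := hmem H hHS
    rw [MonoidAlgebra.mem_supported'] at hm
    exact hm g (by simpa using hgH)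
  · intro hmem H hHS
    rw [MonoidAlgebra.mem_supported'] at hmem ⊢
    intro g hg
    have hgH : g ∈ H := by simpa using hg
    exact hmem g fun hall => hall H hHS hgH
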